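/- Let (N, P_S) be the Z0/Z1 channel and N^{CSIR} its associated channel with CSIR. Then η^{NS,ca}_{opt,M=2,n=2}(N^{CSIR}, P_S) ≥ η^{C,ca}_{opt,M=2,n=2}(N^{CSIR}, P_S) ≥ 7/8, and η^{NS,ca}_{opt,M=2,n=2}(N, P_S) ≤ 13/16. -/

import Mathlib

open scoped Classical BigOperators
open Finset Filter

noncomputable section

def IsPMF {S : Type*} [Fintype S] (P : S → ℝ) : Prop :=
  (∀ s, 0 ≤ P s) ∧ ∑ s, P s = 1

def IsChannel {X Y S : Type*} [Fintype Y] (N : Y → X → S → ℝ) : Prop :=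
  (∀ y x s, 0 ≤ N y x s) ∧ ∀ x s, ∑ y, N y x s = 1

def IsCondPMF {X S : Type*} [Fintype X] (PXS : X → S → ℝ) : Prop :=
  (∀ x s, 0 ≤ PXS x s) ∧ ∀ s, ∑ x, PXS x s = 1

def prodP {S : Type*} (P : S → ℝ) {n : ℕ} (s : Fin n → S) : ℝ := ∏ i, P (s i)

def prodN {X Y S : Type*} (N : Y → X → S → ℝ) {n : ℕ}
    (y : Fin n → Y) (x : Fin n → X) (s : Fin n → S) : ℝ :=
  ∏ i, N (y i) (x i) (s i)

/-- NS-assisted coding scheme with causal CSIT: nonnegativity, normalization,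
and the conditions C1, C2, C3. -/
def IsNSCa {X Y S : Type*} [Fintype X] [Fintype Y] [Fintype S] (M n : ℕ)
    (Z : (Fin n → X) → Fin M → Fin M → (Fin n → S) → (Fin n → Y) → ℝ) : Prop :=
  (∀ x wh w s y, 0 ≤ Z x wh w s y) ∧
  (∀ w s y, ∑ x, ∑ wh, Z x wh w s y = 1) ∧
  (∀ x w s y y', ∑ wh, Z x wh w s y = ∑ wh, Z x wh w s y') ∧
  (∀ wh w w' s s' y, ∑ x, Z x wh w s y = ∑ x, Z x wh w' s' y) ∧
  (∀ i : ℕ, 1 ≤ i → i < n →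
    ∀ (x : Fin n → X) wh w s s' y, (∀ j : Fin n, (j : ℕ) < i → s j = s' j) →
      ∑ x' ∈ univ.filter (fun x' : Fin n → X => ∀ j : Fin n, (j : ℕ) < i → x' j = x j),
        Z x' wh w s y =
      ∑ x' ∈ univ.filter (fun x' : Fin n → X => ∀ j : Fin n, (j : ℕ) < i → x' j = x j),
        Z x' wh w s' y)

def etaNS {X Y S : Type*} [Fintype X] [Fintype Y] [Fintype S]
    (N : Y → X → S → ℝ) (P : S → ℝ) (M n : ℕ)
    (Z : (Fin n → X) → Fin M → Fin M → (Fin n → S) → (Fin n → Y) → ℝ) : ℝ :=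
  (1 / (M : ℝ)) * ∑ w, ∑ x, ∑ s, ∑ y, prodP P s * prodN N y x s * Z x w w s y

def etaNSOpt {X Y S : Type*} [Fintype X] [Fintype Y] [Fintype S]
    (N : Y → X → S → ℝ) (P : S → ℝ) (M n : ℕ) : ℝ :=
  sSup {e : ℝ | ∃ Z : (Fin n → X) → Fin M → Fin M → (Fin n → S) → (Fin n → Y) → ℝ,
    IsNSCa M n Z ∧ etaNS N P M n Z = e}

/-- The length-`(j+1)` prefix `s^{j+1}` of a state sequence. -/
def prefixS {S : Type*} {n : ℕ} (s : Fin n → S) (j : Fin n) : Fin ((j : ℕ) + 1) → S :=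
  fun k => s ⟨k, Nat.lt_of_le_of_lt (Nat.le_of_lt_succ k.isLt) j.isLt⟩

/-- A classical coding scheme with causal CSIT. -/
structure ClassicalCa (X S Y : Type*) [Fintype X] (M n : ℕ) where
  Q : Type
  fq : Fintype Q
  PQ : Q → ℝ
  E : (j : Fin n) → X → (Fin (j : ℕ) → X) → Fin M → (Fin ((j : ℕ) + 1) → S) → Q → ℝ
  D : Fin M → (Fin n → Y) → Q → ℝ
  PQ_nonneg : ∀ q, 0 ≤ PQ q
  PQ_sum : ∑ q ∈ @Finset.univ Q fq, PQ q = 1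
  E_nonneg : ∀ j xj h w sj q, 0 ≤ E j xj h w sj q
  E_sum : ∀ j h w sj q, ∑ xj, E j xj h w sj q = 1
  D_nonneg : ∀ wh y q, 0 ≤ D wh y q
  D_sum : ∀ y q, ∑ wh, D wh y q = 1

def etaC {X Y S : Type*} [Fintype X] [Fintype Y] [Fintype S]
    (N : Y → X → S → ℝ) (P : S → ℝ) (M n : ℕ) (C : ClassicalCa X S Y M n) : ℝ :=
  (1 / (M : ℝ)) * ∑ w : Fin M, ∑ q ∈ @Finset.univ C.Q C.fq, C.PQ q *
    ∑ x : Fin n → X, ∑ s : Fin n → S, ∑ y : Fin n → Y,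
      prodP P s *
      (∏ j, C.E j (x j) (fun k => x ⟨k, k.isLt.trans j.isLt⟩) w (prefixS s j) q) *
      prodN N y x s * C.D w y q

def etaCOpt {X Y S : Type*} [Fintype X] [Fintype Y] [Fintype S]
    (N : Y → X → S → ℝ) (P : S → ℝ) (M n : ℕ) : ℝ :=
  sSup {e : ℝ | ∃ C : ClassicalCa X S Y M n, etaC N P M n C = e}

/-- Conditional mutual information I(X;Y|S) for the joint distribution
P_{XYS}(x,y,s) = P_S(s) P_{X|S}(x|s) N(y|x,s), in bits. -/
def condMI {X Y S : Type*} [Fintype X] [Fintype Y] [Fintype S]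
    (N : Y → X → S → ℝ) (P : S → ℝ) (PXS : X → S → ℝ) : ℝ :=
  ∑ x, ∑ y, ∑ s,
    (P s * PXS x s * N y x s) *
      Real.logb 2 ((P s * PXS x s * N y x s) * P s /
        ((∑ y', P s * PXS x s * N y' x s) * (∑ x', P s * PXS x' s * N y x' s)))

/-- Transition function of the Z0/Z1 channel (arguments: output, input, state). -/
def NZ (y x s : Bool) : ℝ := if x = s then (if y = x then 1 else 0) else 1 / 2

/-- The uniform state distribution of the Z0/Z1 channel. -/
def PZ (_ : Bool) : ℝ := 1 / 2

/-- The channel with CSIR associated to a channel with state. -/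
def NCSIR {X Y S : Type*} (N : Y → X → S → ℝ) : (Y × S) → X → S → ℝ :=
  fun ys x s => if ys.2 = s then N ys.1 x s else 0


lemma sum_fin2' {α : Type*} [Fintype α] (g : (Fin 2 → α) → ℝ) :
    ∑ x : Fin 2 → α, g x = ∑ a, ∑ b, g ![a,b] := by
  rw [← (finTwoArrowEquiv α).symm.sum_comp, Fintype.sum_prod_type]
  rfl

lemma sumXb (g : (Fin 2 → Bool) → ℝ) :
    ∑ x : Fin 2 → Bool, g x
      = g ![false,false] + g ![false,true] + g ![true,false] + g ![true,true] := by
  rw [sum_fin2']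
  simp [Fintype.sum_bool]
  ring


variable {X S Y : Type*} [Fintype X] [Fintype S] [Fintype Y] {M : ℕ}

/-- product of encoder probabilities along the block, matching `etaC`. -/
def prodE (C : ClassicalCa X S Y M 2) (x : Fin 2 → X) (w : Fin M) (s : Fin 2 → S) (q : C.Q) : ℝ :=
  ∏ j, C.E j (x j) (fun k => x ⟨k, k.isLt.trans j.isLt⟩) w (prefixS s j) q

def ZofC (C : ClassicalCa X S Y M 2) :
    (Fin 2 → X) → Fin M → Fin M → (Fin 2 → S) → (Fin 2 → Y) → ℝ :=
  fun x wh w s y => ∑ q ∈ @Finset.univ C.Q C.fq, C.PQ q * prodE C x w s q * C.D wh y q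


def hist0 (C : ClassicalCa X S Y M 2) : Fin ((0 : Fin 2) : ℕ) → X := fun k => absurd k.isLt (by norm_num)
def hist1 (a : X) : Fin ((1 : Fin 2) : ℕ) → X := fun _ => a

lemma prodE_eval (C : ClassicalCa X S Y M 2) (a b : X) (w : Fin M) (s : Fin 2 → S) (q : C.Q) :
    prodE C ![a,b] w s q
      = C.E 0 a (hist0 C) w (prefixS s 0) q * C.E 1 b (hist1 a) w (prefixS s 1) q := by
  rw [prodE, Fin.prod_univ_two]
  congr 1
  · congr 1
    funext k
    exact absurd k.isLt (by norm_num)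
  · congr 1
    funext k
    have hk : (k : ℕ) = 0 := by omega
    show (![a,b] : Fin 2 → X) ⟨(k:ℕ), _⟩ = a
    have : (⟨(k:ℕ), by omega⟩ : Fin 2) = 0 := by ext; simp [hk]
    rw [this]
    rfl

lemma sum_prodE (C : ClassicalCa X S Y M 2) (w : Fin M) (s : Fin 2 → S) (q : C.Q) :
    ∑ x : Fin 2 → X, prodE C x w s q = 1 := by
  rw [show (∑ x : Fin 2 → X, prodE C x w s q) = ∑ a, ∑ b, prodE C ![a,b] w s q from by
    rw [← (finTwoArrowEquiv X).symm.sum_comp, Fintype.sum_prod_type]; rfl]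
  calc ∑ a, ∑ b, prodE C ![a,b] w s q
      = ∑ a : X, C.E 0 a (hist0 C) w (prefixS s 0) q := by
        refine Finset.sum_congr rfl fun a _ => ?_
        simp only [prodE_eval, ← Finset.mul_sum, C.E_sum 1 (hist1 a) w (prefixS s 1) q, mul_one]
    _ = 1 := C.E_sum 0 (hist0 C) w (prefixS s 0) q


lemma sumD_ZofC (C : ClassicalCa X S Y M 2) (x : Fin 2 → X) (w : Fin M) (s : Fin 2 → S)
    (y : Fin 2 → Y) :
    ∑ wh, ZofC C x wh w s y = ∑ q ∈ @Finset.univ C.Q C.fq, C.PQ q * prodE C x w s q := by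
  rw [show (∑ wh, ZofC C x wh w s y)
      = ∑ q ∈ @Finset.univ C.Q C.fq, ∑ wh, C.PQ q * prodE C x w s q * C.D wh y q from
    Finset.sum_comm]
  refine Finset.sum_congr rfl fun q _ => ?_
  rw [← Finset.mul_sum, C.D_sum y q, mul_one]

lemma sumX_ZofC (C : ClassicalCa X S Y M 2) (wh w : Fin M) (s : Fin 2 → S) (y : Fin 2 → Y) :
    ∑ x, ZofC C x wh w s y = ∑ q ∈ @Finset.univ C.Q C.fq, C.PQ q * C.D wh y q := by
  rw [show (∑ x, ZofC C x wh w s y)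
      = ∑ q ∈ @Finset.univ C.Q C.fq, ∑ x : Fin 2 → X, C.PQ q * prodE C x w s q * C.D wh y q from
    Finset.sum_comm]
  refine Finset.sum_congr rfl fun q _ => ?_
  calc ∑ x : Fin 2 → X, C.PQ q * prodE C x w s q * C.D wh y q
      = (C.PQ q * C.D wh y q) * ∑ x : Fin 2 → X, prodE C x w s q := by
        rw [Finset.mul_sum]; exact Finset.sum_congr rfl fun x _ => by ring
    _ = C.PQ q * C.D wh y q := by rw [sum_prodE, mul_one]

lemma prefixS_zero_eq {s s' : Fin 2 → S} (h : ∀ j : Fin 2, (j : ℕ) < 1 → s j = s' j) :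
    prefixS s (0 : Fin 2) = prefixS s' (0 : Fin 2) := by
  funext k
  have hk : (k : ℕ) < 1 := by simpa using k.isLt
  exact h ⟨(k : ℕ), by omega⟩ hk

lemma sum_filter_fin2 {α : Type*} [Fintype α] (g : (Fin 2 → α) → ℝ) (x : Fin 2 → α) :
    ∑ x' ∈ univ.filter (fun x' : Fin 2 → α => ∀ j : Fin 2, (j : ℕ) < 1 → x' j = x j), g x'
      = ∑ b, g ![x 0, b] := by
  rw [Finset.sum_filter,
    show (∑ x' : Fin 2 → α, if (∀ j : Fin 2, (j : ℕ) < 1 → x' j = x j) then g x' else 0)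
      = ∑ a, ∑ b, if (∀ j : Fin 2, (j : ℕ) < 1 → (![a,b] : Fin 2 → α) j = x j) then g ![a,b] else 0
    from by rw [← (finTwoArrowEquiv α).symm.sum_comp, Fintype.sum_prod_type]; rfl]
  have hp : ∀ (a : α) (b : α),
      (∀ j : Fin 2, (j : ℕ) < 1 → (![a,b] : Fin 2 → α) j = x j) ↔ a = x 0 := by
    intro a b
    constructor
    · intro h; exact h 0 (by norm_num)
    · intro h j hj
      have : j = 0 := by omega
      subst this; simpa using h
  simp only [hp]
  rw [Finset.sum_comm]
  simp [Finset.sum_ite_eq']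

lemma sum_rot {α β γ δ : Type*} (sa : Finset α) (sb : Finset β) (sc : Finset γ) (sd : Finset δ)
    (f : α → β → γ → δ → ℝ) :
    ∑ a ∈ sa, ∑ b ∈ sb, ∑ c ∈ sc, ∑ d ∈ sd, f a b c d
      = ∑ d ∈ sd, ∑ a ∈ sa, ∑ b ∈ sb, ∑ c ∈ sc, f a b c d := by
  calc ∑ a ∈ sa, ∑ b ∈ sb, ∑ c ∈ sc, ∑ d ∈ sd, f a b c d
      = ∑ a ∈ sa, ∑ b ∈ sb, ∑ d ∈ sd, ∑ c ∈ sc, f a b c d :=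
        Finset.sum_congr rfl fun a _ => Finset.sum_congr rfl fun b _ => Finset.sum_comm
    _ = ∑ a ∈ sa, ∑ d ∈ sd, ∑ b ∈ sb, ∑ c ∈ sc, f a b c d :=
        Finset.sum_congr rfl fun a _ => Finset.sum_comm
    _ = _ := Finset.sum_comm

lemma filter_sum_ZofC (C : ClassicalCa X S Y M 2) (x : Fin 2 → X) (wh w : Fin M)
    (s : Fin 2 → S) (y : Fin 2 → Y) :
    ∑ x' ∈ univ.filter (fun x' : Fin 2 → X => ∀ j : Fin 2, (j : ℕ) < 1 → x' j = x j),
        ZofC C x' wh w s y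
      = ∑ q ∈ @Finset.univ C.Q C.fq,
          C.PQ q * C.E 0 (x 0) (hist0 C) w (prefixS s 0) q * C.D wh y q := by
  rw [sum_filter_fin2]
  rw [show (∑ b, ZofC C ![x 0, b] wh w s y)
      = ∑ q ∈ @Finset.univ C.Q C.fq, ∑ b, C.PQ q * prodE C ![x 0, b] w s q * C.D wh y q from
    Finset.sum_comm]
  refine Finset.sum_congr rfl fun q _ => ?_
  calc ∑ b, C.PQ q * prodE C ![x 0, b] w s q * C.D wh y q
      = (C.PQ q * C.E 0 (x 0) (hist0 C) w (prefixS s 0) q * C.D wh y q)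
          * ∑ b, C.E 1 b (hist1 (x 0)) w (prefixS s 1) q := by
        rw [Finset.mul_sum]
        exact Finset.sum_congr rfl fun b _ => by rw [prodE_eval]; ring
    _ = _ := by rw [C.E_sum, mul_one]

lemma isNSCa_ZofC (C : ClassicalCa X S Y M 2) : IsNSCa M 2 (ZofC C) := by
  refine ⟨?_, ?_, ?_, ?_, ?_⟩
  · intro x wh w s y
    refine Finset.sum_nonneg fun q _ => ?_
    have h1 := C.PQ_nonneg q
    have h2 : 0 ≤ prodE C x w s q := Finset.prod_nonneg fun j _ => C.E_nonneg _ _ _ _ _ _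
    have h3 := C.D_nonneg wh y q
    positivity
  · intro w s y
    have : ∀ x : Fin 2 → X, ∑ wh, ZofC C x wh w s y
        = ∑ q ∈ @Finset.univ C.Q C.fq, C.PQ q * prodE C x w s q := fun x => sumD_ZofC C x w s y
    rw [Finset.sum_congr rfl fun x _ => this x]
    rw [show (∑ x : Fin 2 → X, ∑ q ∈ @Finset.univ C.Q C.fq, C.PQ q * prodE C x w s q)
        = ∑ q ∈ @Finset.univ C.Q C.fq, ∑ x : Fin 2 → X, C.PQ q * prodE C x w s q from
      Finset.sum_comm]
    rw [show (∑ q ∈ @Finset.univ C.Q C.fq, ∑ x : Fin 2 → X, C.PQ q * prodE C x w s q)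
        = ∑ q ∈ @Finset.univ C.Q C.fq, C.PQ q from
      Finset.sum_congr rfl fun q _ => by rw [← Finset.mul_sum, sum_prodE, mul_one]]
    exact C.PQ_sum
  · intro x w s y y'
    rw [sumD_ZofC, sumD_ZofC]
  · intro wh w w' s s' y
    rw [sumX_ZofC, sumX_ZofC]
  · intro i hi1 hi2 x wh w s s' y hss
    obtain rfl : i = 1 := by omega
    rw [filter_sum_ZofC, filter_sum_ZofC, prefixS_zero_eq hss]

def etaNS' (N : Y → X → S → ℝ) (P : S → ℝ)
    (Z : (Fin 2 → X) → Fin M → Fin M → (Fin 2 → S) → (Fin 2 → Y) → ℝ) : ℝ :=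
  (1 / (M : ℝ)) * ∑ w, ∑ x, ∑ s, ∑ y, prodP P s * prodN N y x s * Z x w w s y

def etaC' (N : Y → X → S → ℝ) (P : S → ℝ) (C : ClassicalCa X S Y M 2) : ℝ :=
  (1 / (M : ℝ)) * ∑ w : Fin M, ∑ q ∈ @Finset.univ C.Q C.fq, C.PQ q *
    ∑ x : Fin 2 → X, ∑ s : Fin 2 → S, ∑ y : Fin 2 → Y,
      prodP P s * prodE C x w s q * prodN N y x s * C.D w y q

lemma etaNS_ZofC (N : Y → X → S → ℝ) (P : S → ℝ) (C : ClassicalCa X S Y M 2) :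
    etaNS' N P (ZofC C) = etaC' N P C := by
  unfold etaNS' etaC'
  congr 1
  refine Finset.sum_congr rfl fun w _ => ?_
  simp only [ZofC, Finset.mul_sum]
  rw [sum_rot univ univ univ (@Finset.univ C.Q C.fq)
    (fun x s y q => prodP P s * prodN N y x s * (C.PQ q * prodE C x w s q * C.D w y q))]
  refine Finset.sum_congr rfl fun q _ => ?_
  refine Finset.sum_congr rfl fun x _ => ?_
  refine Finset.sum_congr rfl fun s _ => ?_
  refine Finset.sum_congr rfl fun y _ => ?_
  ring


def C0 : ClassicalCa Bool Bool (Bool × Bool) 2 2 where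
  Q := Fin 1
  fq := inferInstance
  PQ := fun _ => 1
  E := fun _ xj _ w sj _ => if xj = xor (sj (Fin.last _)) (decide (w = 1)) then 1 else 0
  D := fun wh y _ =>
    if wh = (if ((y 0).1 != (y 0).2) || ((y 1).1 != (y 1).2) then 1 else 0) then 1 else 0
  PQ_nonneg := fun _ => zero_le_one
  PQ_sum := by simp
  E_nonneg := by intro j xj h w sj q; split <;> norm_num
  E_sum := by
    intro j h w sj q; rw [Fintype.sum_bool]
    rcases hb : (xor (sj (Fin.last _)) (decide (w = 1))) <;> simp [hb]
  D_nonneg := by intro wh y q; split <;> split <;> norm_num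
  D_sum := by intro y q; simp

lemma sumYbb (g : (Fin 2 → Bool × Bool) → ℝ) :
    ∑ y : Fin 2 → Bool × Bool, g y = ∑ p : Bool × Bool, ∑ r : Bool × Bool, g ![p, r] :=
  sum_fin2' g


lemma prefix0 (c d : Bool) : prefixS ![c,d] (0:Fin 2) (Fin.last _) = c := rfl

lemma prodE_C0 (a b c d : Bool) (w : Fin 2) (q : Fin 1) :
    prodE C0 ![a,b] w ![c,d] q
      = (if a = xor c (decide (w=1)) then 1 else 0) * (if b = xor d (decide (w=1)) then 1 else 0) := by
  exact (prodE_eval C0 a b w ![c,d] q).trans rfl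

lemma D_C0 (wh : Fin 2) (p r : Bool × Bool) (q : Fin 1) :
    C0.D wh ![p,r] q
      = if wh = (if (p.1 != p.2) || (r.1 != r.2) then 1 else 0) then 1 else 0 := rfl

lemma prodP_PZ (s : Fin 2 → Bool) : prodP PZ s = 1/4 := by
  rw [prodP, Fin.prod_univ_two]; norm_num [PZ]

lemma prodN_eval (p r : Bool × Bool) (a b c d : Bool) :
    prodN (NCSIR NZ) ![p,r] ![a,b] ![c,d] = (NCSIR NZ p a c) * (NCSIR NZ r b d) := by
  rw [prodN, Fin.prod_univ_two]; rfl

set_option maxHeartbeats 2000000 in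
lemma etaC_C0 : etaC' (NCSIR NZ) PZ C0 = 7/8 := by
  unfold etaC'
  rw [Fin.sum_univ_two]
  simp only [show ∀ f : C0.Q → ℝ, ∑ q ∈ @Finset.univ C0.Q C0.fq, f q = f (0 : Fin 1) from
      fun f => Fin.sum_univ_one f, sumXb, sumYbb, Fintype.sum_prod_type, Fintype.sum_bool,
    prodE_C0, D_C0, prodP_PZ, prodN_eval]
  norm_num [NCSIR, NZ, C0, show ∀ q : Fin 1, C0.PQ q = (1:ℝ) from fun _ => rfl]


lemma prodN_two {X Y S : Type*} (N : Y → X → S → ℝ) (y : Fin 2 → Y) (x : Fin 2 → X) (s : Fin 2 → S) :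
    prodN N y x s = N (y 0) (x 0) (s 0) * N (y 1) (x 1) (s 1) := by
  rw [prodN, Fin.prod_univ_two]
set_option maxHeartbeats 4000000 in
lemma etaNS_NZ_le (Z : (Fin 2 → Bool) → Fin 2 → Fin 2 → (Fin 2 → Bool) → (Fin 2 → Bool) → ℝ)
    (hZ : IsNSCa 2 2 Z) : etaNS' NZ PZ Z ≤ 13/16 := by
  obtain ⟨hnn, hnorm, hC1, hC2, hC3⟩ := hZ
  have h1 := hnorm 0 ![true,true] ![true,true]
  simp only [sumXb, Fin.sum_univ_two] at h1
  have h2 := hnorm 1 ![false,false] ![false,false]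
  simp only [sumXb, Fin.sum_univ_two] at h2
  have h3 := hnorm 1 ![false,false] ![false,true]
  simp only [sumXb, Fin.sum_univ_two] at h3
  have h4 := hnorm 1 ![false,false] ![true,false]
  simp only [sumXb, Fin.sum_univ_two] at h4
  have h5 := hnorm 1 ![false,true] ![true,true]
  simp only [sumXb, Fin.sum_univ_two] at h5
  have h6 := hnorm 1 ![true,false] ![false,false]
  simp only [sumXb, Fin.sum_univ_two] at h6
  have h7 := hnorm 1 ![true,false] ![true,false]
  simp only [sumXb, Fin.sum_univ_two] at h7
  have h8 := hnorm 1 ![true,false] ![true,true]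
  simp only [sumXb, Fin.sum_univ_two] at h8
  have h9 := hnorm 1 ![true,true] ![true,true]
  simp only [sumXb, Fin.sum_univ_two] at h9
  have h10 := hC1 ![false,false] 0 ![false,false] ![false,true] ![false,false]
  simp only [Fin.sum_univ_two] at h10
  have h11 := hC1 ![false,false] 0 ![false,false] ![true,true] ![false,false]
  simp only [Fin.sum_univ_two] at h11
  have h12 := hC1 ![false,false] 0 ![false,true] ![false,true] ![false,false]
  simp only [Fin.sum_univ_two] at h12
  have h13 := hC1 ![false,false] 0 ![false,true] ![true,true] ![false,false]
  simp only [Fin.sum_univ_two] at h13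
  have h14 := hC1 ![false,false] 0 ![true,false] ![true,false] ![false,false]
  simp only [Fin.sum_univ_two] at h14
  have h15 := hC1 ![false,false] 0 ![true,true] ![false,true] ![false,false]
  simp only [Fin.sum_univ_two] at h15
  have h16 := hC1 ![false,false] 0 ![true,true] ![true,true] ![false,false]
  simp only [Fin.sum_univ_two] at h16
  have h17 := hC1 ![false,false] 1 ![false,false] ![false,true] ![false,false]
  simp only [Fin.sum_univ_two] at h17
  have h18 := hC1 ![false,false] 1 ![false,true] ![false,true] ![false,false]
  simp only [Fin.sum_univ_two] at h18
  have h19 := hC1 ![false,false] 1 ![false,true] ![true,true] ![false,false]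
  simp only [Fin.sum_univ_two] at h19
  have h20 := hC1 ![false,false] 1 ![true,true] ![false,true] ![false,false]
  simp only [Fin.sum_univ_two] at h20
  have h21 := hC1 ![false,false] 1 ![true,true] ![true,false] ![false,false]
  simp only [Fin.sum_univ_two] at h21
  have h22 := hC1 ![false,false] 1 ![true,true] ![true,true] ![false,false]
  simp only [Fin.sum_univ_two] at h22
  have h23 := hC1 ![false,true] 0 ![false,false] ![false,true] ![false,false]
  simp only [Fin.sum_univ_two] at h23
  have h24 := hC1 ![false,true] 0 ![false,false] ![true,true] ![false,false]
  simp only [Fin.sum_univ_two] at h24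
  have h25 := hC1 ![false,true] 0 ![false,true] ![false,true] ![false,false]
  simp only [Fin.sum_univ_two] at h25
  have h26 := hC1 ![false,true] 0 ![false,true] ![true,true] ![false,false]
  simp only [Fin.sum_univ_two] at h26
  have h27 := hC1 ![false,true] 0 ![true,false] ![false,true] ![false,false]
  simp only [Fin.sum_univ_two] at h27
  have h28 := hC1 ![false,true] 0 ![true,false] ![true,true] ![false,false]
  simp only [Fin.sum_univ_two] at h28
  have h29 := hC1 ![false,true] 0 ![true,true] ![false,true] ![false,false]
  simp only [Fin.sum_univ_two] at h29
  have h30 := hC1 ![false,true] 0 ![true,true] ![true,true] ![false,false]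
  simp only [Fin.sum_univ_two] at h30
  have h31 := hC1 ![false,true] 1 ![false,false] ![false,true] ![false,false]
  simp only [Fin.sum_univ_two] at h31
  have h32 := hC1 ![false,true] 1 ![false,true] ![false,true] ![false,false]
  simp only [Fin.sum_univ_two] at h32
  have h33 := hC1 ![false,true] 1 ![false,true] ![true,true] ![false,false]
  simp only [Fin.sum_univ_two] at h33
  have h34 := hC1 ![false,true] 1 ![true,false] ![false,true] ![false,false]
  simp only [Fin.sum_univ_two] at h34
  have h35 := hC1 ![false,true] 1 ![true,true] ![false,true] ![false,false]
  simp only [Fin.sum_univ_two] at h35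
  have h36 := hC1 ![false,true] 1 ![true,true] ![true,true] ![false,false]
  simp only [Fin.sum_univ_two] at h36
  have h37 := hC1 ![true,false] 0 ![false,false] ![false,true] ![false,false]
  simp only [Fin.sum_univ_two] at h37
  have h38 := hC1 ![true,false] 0 ![false,false] ![true,false] ![false,false]
  simp only [Fin.sum_univ_two] at h38
  have h39 := hC1 ![true,false] 0 ![false,false] ![true,true] ![false,false]
  simp only [Fin.sum_univ_two] at h39
  have h40 := hC1 ![true,false] 0 ![false,true] ![false,true] ![false,false]
  simp only [Fin.sum_univ_two] at h40
  have h41 := hC1 ![true,false] 0 ![false,true] ![true,false] ![false,false]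
  simp only [Fin.sum_univ_two] at h41
  have h42 := hC1 ![true,false] 0 ![false,true] ![true,true] ![false,false]
  simp only [Fin.sum_univ_two] at h42
  have h43 := hC1 ![true,false] 0 ![true,false] ![true,false] ![false,false]
  simp only [Fin.sum_univ_two] at h43
  have h44 := hC1 ![true,false] 0 ![true,true] ![true,false] ![false,false]
  simp only [Fin.sum_univ_two] at h44
  have h45 := hC1 ![true,false] 0 ![true,true] ![true,true] ![false,false]
  simp only [Fin.sum_univ_two] at h45
  have h46 := hC1 ![true,false] 1 ![false,false] ![true,false] ![false,false]
  simp only [Fin.sum_univ_two] at h46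
  have h47 := hC1 ![true,false] 1 ![false,true] ![true,false] ![false,false]
  simp only [Fin.sum_univ_two] at h47
  have h48 := hC1 ![true,false] 1 ![false,true] ![true,true] ![false,false]
  simp only [Fin.sum_univ_two] at h48
  have h49 := hC1 ![true,false] 1 ![true,false] ![true,false] ![false,false]
  simp only [Fin.sum_univ_two] at h49
  have h50 := hC1 ![true,false] 1 ![true,false] ![true,true] ![false,false]
  simp only [Fin.sum_univ_two] at h50
  have h51 := hC1 ![true,false] 1 ![true,true] ![true,false] ![false,false]
  simp only [Fin.sum_univ_two] at h51
  have h52 := hC1 ![true,false] 1 ![true,true] ![true,true] ![false,false]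
  simp only [Fin.sum_univ_two] at h52
  have h53 := hC1 ![true,true] 0 ![false,false] ![false,true] ![false,false]
  simp only [Fin.sum_univ_two] at h53
  have h54 := hC1 ![true,true] 0 ![false,false] ![true,true] ![false,false]
  simp only [Fin.sum_univ_two] at h54
  have h55 := hC1 ![true,true] 0 ![false,true] ![false,true] ![false,false]
  simp only [Fin.sum_univ_two] at h55
  have h56 := hC1 ![true,true] 0 ![true,false] ![true,true] ![false,false]
  simp only [Fin.sum_univ_two] at h56
  have h57 := hC1 ![true,true] 0 ![true,true] ![true,true] ![false,false]
  simp only [Fin.sum_univ_two] at h57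
  have h58 := hC1 ![true,true] 1 ![false,false] ![true,true] ![false,false]
  simp only [Fin.sum_univ_two] at h58
  have h59 := hC1 ![true,true] 1 ![true,false] ![true,true] ![false,false]
  simp only [Fin.sum_univ_two] at h59
  have h60 := hC2 0 0 0 ![true,false] ![false,false] ![false,false]
  simp only [sumXb] at h60
  have h61 := hC2 0 0 0 ![true,true] ![false,false] ![false,false]
  simp only [sumXb] at h61
  have h62 := hC2 0 1 0 ![false,false] ![false,false] ![false,false]
  simp only [sumXb] at h62
  have h63 := hC2 0 1 0 ![true,false] ![false,false] ![false,false]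
  simp only [sumXb] at h63
  have h64 := hC2 0 0 0 ![false,true] ![false,false] ![false,true]
  simp only [sumXb] at h64
  have h65 := hC2 0 1 0 ![false,false] ![false,false] ![false,true]
  simp only [sumXb] at h65
  have h66 := hC2 0 0 0 ![true,false] ![false,false] ![true,false]
  simp only [sumXb] at h66
  have h67 := hC2 0 0 0 ![true,true] ![false,false] ![true,false]
  simp only [sumXb] at h67
  have h68 := hC2 0 1 0 ![false,false] ![false,false] ![true,false]
  simp only [sumXb] at h68
  have h69 := hC2 0 1 0 ![true,false] ![false,false] ![true,false]
  simp only [sumXb] at h69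
  have h70 := hC2 0 0 0 ![false,true] ![false,false] ![true,true]
  simp only [sumXb] at h70
  have h71 := hC2 0 0 0 ![true,true] ![false,false] ![true,true]
  simp only [sumXb] at h71
  have h72 := hC2 0 1 0 ![false,false] ![false,false] ![true,true]
  simp only [sumXb] at h72
  have h73 := hC2 1 0 0 ![false,true] ![false,false] ![false,false]
  simp only [sumXb] at h73
  have h74 := hC2 1 0 0 ![true,false] ![false,false] ![false,false]
  simp only [sumXb] at h74
  have h75 := hC2 1 0 0 ![true,true] ![false,false] ![false,false]
  simp only [sumXb] at h75
  have h76 := hC2 1 1 0 ![false,true] ![false,false] ![false,false]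
  simp only [sumXb] at h76
  have h77 := hC2 1 0 0 ![false,true] ![false,false] ![false,true]
  simp only [sumXb] at h77
  have h78 := hC2 1 1 0 ![false,true] ![false,false] ![false,true]
  simp only [sumXb] at h78
  have h79 := hC2 1 0 0 ![false,true] ![false,false] ![true,true]
  simp only [sumXb] at h79
  have h80 := hC2 1 1 0 ![false,true] ![false,false] ![true,true]
  simp only [sumXb] at h80
  have h81 := hC2 1 1 0 ![true,true] ![false,false] ![true,true]
  simp only [sumXb] at h81
  have h82 := hC3 1 le_rfl one_lt_two ![false,false] 0 0 ![false,false] ![false,true] ![false,false] (fun j hj => by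
    have hj0 : j = 0 := by omega
    subst hj0; rfl)
  rw [sum_filter_fin2, sum_filter_fin2] at h82
  simp only [Matrix.cons_val_zero, Fintype.sum_bool] at h82
  have h83 := hC3 1 le_rfl one_lt_two ![false,false] 0 1 ![false,false] ![false,true] ![false,true] (fun j hj => by
    have hj0 : j = 0 := by omega
    subst hj0; rfl)
  rw [sum_filter_fin2, sum_filter_fin2] at h83
  simp only [Matrix.cons_val_zero, Fintype.sum_bool] at h83
  have h84 := hC3 1 le_rfl one_lt_two ![false,false] 0 1 ![false,false] ![false,true] ![true,true] (fun j hj => by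
    have hj0 : j = 0 := by omega
    subst hj0; rfl)
  rw [sum_filter_fin2, sum_filter_fin2] at h84
  simp only [Matrix.cons_val_zero, Fintype.sum_bool] at h84
  have h85 := hC3 1 le_rfl one_lt_two ![false,false] 0 1 ![true,false] ![true,true] ![false,true] (fun j hj => by
    have hj0 : j = 0 := by omega
    subst hj0; rfl)
  rw [sum_filter_fin2, sum_filter_fin2] at h85
  simp only [Matrix.cons_val_zero, Fintype.sum_bool] at h85
  have h86 := hC3 1 le_rfl one_lt_two ![false,false] 0 1 ![true,false] ![true,true] ![true,true] (fun j hj => by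
    have hj0 : j = 0 := by omega
    subst hj0; rfl)
  rw [sum_filter_fin2, sum_filter_fin2] at h86
  simp only [Matrix.cons_val_zero, Fintype.sum_bool] at h86
  have h87 := hC3 1 le_rfl one_lt_two ![true,false] 0 0 ![true,false] ![true,true] ![true,false] (fun j hj => by
    have hj0 : j = 0 := by omega
    subst hj0; rfl)
  rw [sum_filter_fin2, sum_filter_fin2] at h87
  simp only [Matrix.cons_val_zero, Fintype.sum_bool] at h87
  have hslack : (0:ℝ) ≤ (1/32 : ℝ) * Z ![false,false] 0 0 ![false,false] ![false,true] +
      (1/32 : ℝ) * Z ![false,false] 0 0 ![false,false] ![true,false] +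
      (1/32 : ℝ) * Z ![false,false] 0 0 ![true,true] ![true,true] +
      (1/16 : ℝ) * Z ![false,false] 0 1 ![false,false] ![false,false] +
      (1/32 : ℝ) * Z ![false,false] 0 1 ![false,true] ![false,false] +
      (1/32 : ℝ) * Z ![false,false] 0 1 ![true,false] ![false,false] +
      (1/32 : ℝ) * Z ![false,false] 0 1 ![true,false] ![false,true] +
      (1/32 : ℝ) * Z ![false,false] 0 1 ![true,true] ![false,false] +
      (1/32 : ℝ) * Z ![false,false] 0 1 ![true,true] ![true,false] +
      (1/32 : ℝ) * Z ![false,false] 1 0 ![false,false] ![false,false] +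
      (1/16 : ℝ) * Z ![false,false] 1 0 ![false,true] ![false,false] +
      (1/32 : ℝ) * Z ![false,false] 1 0 ![true,false] ![false,false] +
      (1/32 : ℝ) * Z ![false,false] 1 0 ![true,false] ![true,false] +
      (1/32 : ℝ) * Z ![false,false] 1 0 ![true,true] ![false,false] +
      (1/32 : ℝ) * Z ![false,false] 1 0 ![true,true] ![false,true] +
      (1/32 : ℝ) * Z ![false,false] 1 1 ![false,false] ![true,false] +
      (1/32 : ℝ) * Z ![false,false] 1 1 ![false,true] ![false,true] +
      (1/32 : ℝ) * Z ![false,false] 1 1 ![true,false] ![true,true] +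
      (1/32 : ℝ) * Z ![false,true] 0 0 ![false,false] ![false,false] +
      (1/32 : ℝ) * Z ![false,true] 0 0 ![false,false] ![true,false] +
      (1/32 : ℝ) * Z ![false,true] 0 0 ![true,true] ![true,false] +
      (1/16 : ℝ) * Z ![false,true] 0 1 ![false,false] ![false,true] +
      (1/32 : ℝ) * Z ![false,true] 0 1 ![false,true] ![false,true] +
      (1/16 : ℝ) * Z ![false,true] 0 1 ![true,false] ![false,true] +
      (1/32 : ℝ) * Z ![false,true] 0 1 ![true,true] ![false,true] +
      (1/32 : ℝ) * Z ![false,true] 0 1 ![true,true] ![true,true] +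
      (1/32 : ℝ) * Z ![false,true] 1 0 ![false,false] ![false,true] +
      (1/16 : ℝ) * Z ![false,true] 1 0 ![false,true] ![false,true] +
      (1/32 : ℝ) * Z ![false,true] 1 0 ![true,false] ![false,true] +
      (1/32 : ℝ) * Z ![false,true] 1 0 ![true,false] ![true,true] +
      (1/16 : ℝ) * Z ![false,true] 1 0 ![true,true] ![false,true] +
      (1/32 : ℝ) * Z ![false,true] 1 1 ![false,false] ![true,false] +
      (1/32 : ℝ) * Z ![false,true] 1 1 ![false,true] ![false,false] +
      (1/32 : ℝ) * Z ![false,true] 1 1 ![true,false] ![true,false] +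
      (1/32 : ℝ) * Z ![true,false] 0 0 ![false,false] ![false,true] +
      (1/32 : ℝ) * Z ![true,false] 0 0 ![false,true] ![false,true] +
      (1/32 : ℝ) * Z ![true,false] 0 0 ![true,false] ![false,false] +
      (1/32 : ℝ) * Z ![true,false] 0 1 ![false,false] ![true,false] +
      (1/32 : ℝ) * Z ![true,false] 0 1 ![false,false] ![true,true] +
      (1/32 : ℝ) * Z ![true,false] 0 1 ![false,true] ![true,false] +
      (1/16 : ℝ) * Z ![true,false] 0 1 ![true,false] ![true,false] +
      (1/16 : ℝ) * Z ![true,false] 0 1 ![true,true] ![true,false] +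
      (1/32 : ℝ) * Z ![true,false] 1 0 ![false,false] ![true,false] +
      (1/32 : ℝ) * Z ![true,false] 1 0 ![false,true] ![true,false] +
      (1/32 : ℝ) * Z ![true,false] 1 0 ![false,true] ![true,true] +
      (1/16 : ℝ) * Z ![true,false] 1 0 ![true,false] ![true,false] +
      (1/16 : ℝ) * Z ![true,false] 1 0 ![true,true] ![true,false] +
      (1/32 : ℝ) * Z ![true,false] 1 1 ![false,false] ![false,true] +
      (1/32 : ℝ) * Z ![true,false] 1 1 ![false,true] ![false,true] +
      (1/32 : ℝ) * Z ![true,false] 1 1 ![true,false] ![false,false] +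
      (1/32 : ℝ) * Z ![true,true] 0 0 ![false,false] ![false,false] +
      (1/32 : ℝ) * Z ![true,true] 0 0 ![false,true] ![false,false] +
      (1/32 : ℝ) * Z ![true,true] 0 0 ![true,false] ![false,false] +
      (1/16 : ℝ) * Z ![true,true] 0 1 ![false,false] ![true,true] +
      (1/32 : ℝ) * Z ![true,true] 0 1 ![false,true] ![true,true] +
      (1/16 : ℝ) * Z ![true,true] 0 1 ![true,false] ![true,true] +
      (1/16 : ℝ) * Z ![true,true] 0 1 ![true,true] ![true,true] +
      (1/32 : ℝ) * Z ![true,true] 1 0 ![false,false] ![true,true] +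
      (1/16 : ℝ) * Z ![true,true] 1 0 ![false,true] ![true,true] +
      (1/16 : ℝ) * Z ![true,true] 1 0 ![true,false] ![true,true] +
      (1/16 : ℝ) * Z ![true,true] 1 0 ![true,true] ![true,true] +
      (1/32 : ℝ) * Z ![true,true] 1 1 ![false,false] ![false,false] +
      (1/32 : ℝ) * Z ![true,true] 1 1 ![false,true] ![false,false] +
      (1/32 : ℝ) * Z ![true,true] 1 1 ![true,false] ![false,false] := by
    repeat' apply add_nonneg
    all_goals exact mul_nonneg (by norm_num) (hnn _ _ _ _ _)
  have hE : etaNS' NZ PZ Z = 13/16 - ((1/32 : ℝ) * Z ![false,false] 0 0 ![false,false] ![false,true] +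
      (1/32 : ℝ) * Z ![false,false] 0 0 ![false,false] ![true,false] +
      (1/32 : ℝ) * Z ![false,false] 0 0 ![true,true] ![true,true] +
      (1/16 : ℝ) * Z ![false,false] 0 1 ![false,false] ![false,false] +
      (1/32 : ℝ) * Z ![false,false] 0 1 ![false,true] ![false,false] +
      (1/32 : ℝ) * Z ![false,false] 0 1 ![true,false] ![false,false] +
      (1/32 : ℝ) * Z ![false,false] 0 1 ![true,false] ![false,true] +
      (1/32 : ℝ) * Z ![false,false] 0 1 ![true,true] ![false,false] +
      (1/32 : ℝ) * Z ![false,false] 0 1 ![true,true] ![true,false] +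
      (1/32 : ℝ) * Z ![false,false] 1 0 ![false,false] ![false,false] +
      (1/16 : ℝ) * Z ![false,false] 1 0 ![false,true] ![false,false] +
      (1/32 : ℝ) * Z ![false,false] 1 0 ![true,false] ![false,false] +
      (1/32 : ℝ) * Z ![false,false] 1 0 ![true,false] ![true,false] +
      (1/32 : ℝ) * Z ![false,false] 1 0 ![true,true] ![false,false] +
      (1/32 : ℝ) * Z ![false,false] 1 0 ![true,true] ![false,true] +
      (1/32 : ℝ) * Z ![false,false] 1 1 ![false,false] ![true,false] +
      (1/32 : ℝ) * Z ![false,false] 1 1 ![false,true] ![false,true] +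
      (1/32 : ℝ) * Z ![false,false] 1 1 ![true,false] ![true,true] +
      (1/32 : ℝ) * Z ![false,true] 0 0 ![false,false] ![false,false] +
      (1/32 : ℝ) * Z ![false,true] 0 0 ![false,false] ![true,false] +
      (1/32 : ℝ) * Z ![false,true] 0 0 ![true,true] ![true,false] +
      (1/16 : ℝ) * Z ![false,true] 0 1 ![false,false] ![false,true] +
      (1/32 : ℝ) * Z ![false,true] 0 1 ![false,true] ![false,true] +
      (1/16 : ℝ) * Z ![false,true] 0 1 ![true,false] ![false,true] +
      (1/32 : ℝ) * Z ![false,true] 0 1 ![true,true] ![false,true] +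
      (1/32 : ℝ) * Z ![false,true] 0 1 ![true,true] ![true,true] +
      (1/32 : ℝ) * Z ![false,true] 1 0 ![false,false] ![false,true] +
      (1/16 : ℝ) * Z ![false,true] 1 0 ![false,true] ![false,true] +
      (1/32 : ℝ) * Z ![false,true] 1 0 ![true,false] ![false,true] +
      (1/32 : ℝ) * Z ![false,true] 1 0 ![true,false] ![true,true] +
      (1/16 : ℝ) * Z ![false,true] 1 0 ![true,true] ![false,true] +
      (1/32 : ℝ) * Z ![false,true] 1 1 ![false,false] ![true,false] +
      (1/32 : ℝ) * Z ![false,true] 1 1 ![false,true] ![false,false] +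
      (1/32 : ℝ) * Z ![false,true] 1 1 ![true,false] ![true,false] +
      (1/32 : ℝ) * Z ![true,false] 0 0 ![false,false] ![false,true] +
      (1/32 : ℝ) * Z ![true,false] 0 0 ![false,true] ![false,true] +
      (1/32 : ℝ) * Z ![true,false] 0 0 ![true,false] ![false,false] +
      (1/32 : ℝ) * Z ![true,false] 0 1 ![false,false] ![true,false] +
      (1/32 : ℝ) * Z ![true,false] 0 1 ![false,false] ![true,true] +
      (1/32 : ℝ) * Z ![true,false] 0 1 ![false,true] ![true,false] +
      (1/16 : ℝ) * Z ![true,false] 0 1 ![true,false] ![true,false] +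
      (1/16 : ℝ) * Z ![true,false] 0 1 ![true,true] ![true,false] +
      (1/32 : ℝ) * Z ![true,false] 1 0 ![false,false] ![true,false] +
      (1/32 : ℝ) * Z ![true,false] 1 0 ![false,true] ![true,false] +
      (1/32 : ℝ) * Z ![true,false] 1 0 ![false,true] ![true,true] +
      (1/16 : ℝ) * Z ![true,false] 1 0 ![true,false] ![true,false] +
      (1/16 : ℝ) * Z ![true,false] 1 0 ![true,true] ![true,false] +
      (1/32 : ℝ) * Z ![true,false] 1 1 ![false,false] ![false,true] +
      (1/32 : ℝ) * Z ![true,false] 1 1 ![false,true] ![false,true] +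
      (1/32 : ℝ) * Z ![true,false] 1 1 ![true,false] ![false,false] +
      (1/32 : ℝ) * Z ![true,true] 0 0 ![false,false] ![false,false] +
      (1/32 : ℝ) * Z ![true,true] 0 0 ![false,true] ![false,false] +
      (1/32 : ℝ) * Z ![true,true] 0 0 ![true,false] ![false,false] +
      (1/16 : ℝ) * Z ![true,true] 0 1 ![false,false] ![true,true] +
      (1/32 : ℝ) * Z ![true,true] 0 1 ![false,true] ![true,true] +
      (1/16 : ℝ) * Z ![true,true] 0 1 ![true,false] ![true,true] +
      (1/16 : ℝ) * Z ![true,true] 0 1 ![true,true] ![true,true] +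
      (1/32 : ℝ) * Z ![true,true] 1 0 ![false,false] ![true,true] +
      (1/16 : ℝ) * Z ![true,true] 1 0 ![false,true] ![true,true] +
      (1/16 : ℝ) * Z ![true,true] 1 0 ![true,false] ![true,true] +
      (1/16 : ℝ) * Z ![true,true] 1 0 ![true,true] ![true,true] +
      (1/32 : ℝ) * Z ![true,true] 1 1 ![false,false] ![false,false] +
      (1/32 : ℝ) * Z ![true,true] 1 1 ![false,true] ![false,false] +
      (1/32 : ℝ) * Z ![true,true] 1 1 ![true,false] ![false,false]) := by
    unfold etaNS'
    simp only [Fin.sum_univ_two, sumXb, prodP_PZ, prodN_two, Matrix.cons_val_zero,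
      Matrix.cons_val_one, Matrix.head_cons, NZ, Nat.cast_ofNat]
    norm_num
    linear_combination (13/32 : ℝ) * h1 + (3/32 : ℝ) * h2 + (1/32 : ℝ) * h3 + (1/32 : ℝ) * h4 + (1/32 : ℝ) * h5 + (1/16 : ℝ) * h6 + (1/16 : ℝ) * h7 + (1/32 : ℝ) * h8 + (1/16 : ℝ) * h9 + (3/32 : ℝ) * h10 + (5/32 : ℝ) * h11 + (-1/32 : ℝ) * h12 + (-1/16 : ℝ) * h13 + (1/32 : ℝ) * h14 + (1/32 : ℝ) * h15 + (-13/32 : ℝ) * h16 + (-1/32 : ℝ) * h17 + (1/32 : ℝ) * h18 + (-1/16 : ℝ) * h19 + (1/32 : ℝ) * h20 + (1/32 : ℝ) * h21 + (-3/32 : ℝ) * h22 + (1/8 : ℝ) * h23 + (5/32 : ℝ) * h24 + (1/32 : ℝ) * h25 + (-1/16 : ℝ) * h26 + (1/32 : ℝ) * h27 + (1/32 : ℝ) * h28 + (1/16 : ℝ) * h29 + (-13/32 : ℝ) * h30 + (1/32 : ℝ) * h31 + (1/16 : ℝ) * h32 + (-1/16 : ℝ) * h33 + (1/32 : ℝ)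 * h34 + (1/16 : ℝ) * h35 + (-1/16 : ℝ) * h36 + (3/32 : ℝ) * h37 + (1/32 : ℝ) * h38 + (5/32 : ℝ) * h39 + (-1/32 : ℝ) * h40 + (1/32 : ℝ) * h41 + (-1/32 : ℝ) * h42 + (1/16 : ℝ) * h43 + (1/16 : ℝ) * h44 + (-13/32 : ℝ) * h45 + (1/32 : ℝ) * h46 + (1/32 : ℝ) * h47 + (-1/32 : ℝ) * h48 + (1/16 : ℝ) * h49 + (-1/32 : ℝ) * h50 + (1/16 : ℝ) * h51 + (-1/16 : ℝ) * h52 + (3/32 : ℝ) * h53 + (3/16 : ℝ) * h54 + (-1/32 : ℝ) * h55 + (1/16 : ℝ) * h56 + (-11/32 : ℝ) * h57 + (1/32 : ℝ) * h58 + (1/32 : ℝ) * h59 + (3/32 : ℝ) * h60 + (-11/32 : ℝ) * h61 + (-1/16 : ℝ) * h62 + (-1/32 : ℝ) * h63 + (3/32 : ℝ) * h64 + (-1/32 : ℝ) * h65 + (1/32 : ℝ) * h66 + (1/32 : ℝ) * h67 + (-1/32 : ℝ) * h68 + (-1/16 : ℝ) * h69 + (1/16 : ℝ) * h70 + (1/16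 : ℝ) * h71 + (1/32 : ℝ) * h72 + (-1/32 : ℝ) * h73 + (1/16 : ℝ) * h74 + (-11/32 : ℝ) * h75 + (1/32 : ℝ) * h76 + (1/32 : ℝ) * h77 + (1/16 : ℝ) * h78 + (1/16 : ℝ) * h79 + (1/32 : ℝ) * h80 + (1/16 : ℝ) * h81 + (1/32 : ℝ) * h82 + (1/32 : ℝ) * h83 + (-1/32 : ℝ) * h84 + (1/32 : ℝ) * h85 + (-1/32 : ℝ) * h86 + (1/32 : ℝ) * h87
  rw [hE]
  linarith [hslack]


lemma etaNS_CSIR_le (Z : (Fin 2 → Bool) → Fin 2 → Fin 2 → (Fin 2 → Bool) →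
    (Fin 2 → Bool × Bool) → ℝ) (hZ : IsNSCa 2 2 Z) : etaNS (NCSIR NZ) PZ 2 2 Z ≤ 64 := by
  obtain ⟨hnn, hnorm, -, -, -⟩ := hZ
  have hPN : ∀ (y : Fin 2 → Bool × Bool) (x s : Fin 2 → Bool),
      prodP PZ s * prodN (NCSIR NZ) y x s ≤ 1 := by
    intro y x s
    have h1 : prodP PZ s = 1/4 := prodP_PZ s
    have h3 : prodN (NCSIR NZ) y x s ≤ 1 :=
      Finset.prod_le_one (fun i _ => by unfold NCSIR NZ; split_ifs <;> norm_num)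
        (fun i _ => by unfold NCSIR NZ; split_ifs <;> norm_num)
    have h2 : 0 ≤ prodN (NCSIR NZ) y x s :=
      Finset.prod_nonneg (fun i _ => by unfold NCSIR NZ; split_ifs <;> norm_num)
    rw [h1]; linarith
  have hw : ∀ w : Fin 2, ∑ x : Fin 2 → Bool, ∑ s : Fin 2 → Bool, ∑ y : Fin 2 → Bool × Bool,
      prodP PZ s * prodN (NCSIR NZ) y x s * Z x w w s y ≤ 64 := by
    intro w
    have t3 : ∀ (s : Fin 2 → Bool) (y : Fin 2 → Bool × Bool), ∑ x, Z x w w s y ≤ 1 := by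
      intro s y
      calc ∑ x, Z x w w s y ≤ ∑ x, ∑ wh, Z x wh w s y :=
            Finset.sum_le_sum fun x _ =>
              Finset.single_le_sum (fun wh _ => hnn x wh w s y) (Finset.mem_univ w)
        _ = 1 := hnorm w s y
    calc ∑ x : Fin 2 → Bool, ∑ s : Fin 2 → Bool, ∑ y : Fin 2 → Bool × Bool,
          prodP PZ s * prodN (NCSIR NZ) y x s * Z x w w s y
        ≤ ∑ x : Fin 2 → Bool, ∑ s : Fin 2 → Bool, ∑ y : Fin 2 → Bool × Bool, Z x w w s y :=
          Finset.sum_le_sum fun x _ => Finset.sum_le_sum fun s _ => Finset.sum_le_sum fun y _ =>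
            mul_le_of_le_one_left (hnn _ _ _ _ _) (hPN y x s)
      _ = ∑ s : Fin 2 → Bool, ∑ y : Fin 2 → Bool × Bool, ∑ x : Fin 2 → Bool, Z x w w s y := by
          rw [Finset.sum_comm]
          exact Finset.sum_congr rfl fun s _ => Finset.sum_comm
      _ ≤ ∑ _s : Fin 2 → Bool, ∑ _y : Fin 2 → Bool × Bool, (1:ℝ) :=
          Finset.sum_le_sum fun s _ => Finset.sum_le_sum fun y _ => t3 s y
      _ ≤ 64 := by
          simp [Finset.sum_const, Finset.card_univ]
          norm_num
  show etaNS' (NCSIR NZ) PZ Z ≤ 64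
  unfold etaNS'
  rw [Fin.sum_univ_two]
  have h0 := hw 0
  have h1 := hw 1
  have : ((2:ℕ):ℝ) = 2 := by norm_num
  rw [this]
  linarith

/-- For the Z0/Z1 channel, at message size 2 and blocklength 2:
`η^{NS,ca}_opt(N^CSIR) ≥ η^{C,ca}_opt(N^CSIR) ≥ 7/8` while `η^{NS,ca}_opt(N) ≤ 13/16`. -/
theorem z0z1_csir_vs_no_csir :
    etaNSOpt (NCSIR NZ) PZ 2 2 ≥ etaCOpt (NCSIR NZ) PZ 2 2 ∧
    etaCOpt (NCSIR NZ) PZ 2 2 ≥ 7 / 8 ∧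
    etaNSOpt NZ PZ 2 2 ≤ 13 / 16 := by
  have hbdd : BddAbove {e : ℝ | ∃ Z : (Fin 2 → Bool) → Fin 2 → Fin 2 → (Fin 2 → Bool) →
      (Fin 2 → Bool × Bool) → ℝ, IsNSCa 2 2 Z ∧ etaNS (NCSIR NZ) PZ 2 2 Z = e} := by
    refine ⟨64, ?_⟩
    rintro e ⟨Z, hZ, rfl⟩
    exact etaNS_CSIR_le Z hZ
  have hsub : {e : ℝ | ∃ C : ClassicalCa Bool Bool (Bool × Bool) 2 2,
      etaC (NCSIR NZ) PZ 2 2 C = e}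
      ⊆ {e : ℝ | ∃ Z : (Fin 2 → Bool) → Fin 2 → Fin 2 → (Fin 2 → Bool) →
          (Fin 2 → Bool × Bool) → ℝ, IsNSCa 2 2 Z ∧ etaNS (NCSIR NZ) PZ 2 2 Z = e} := by
    rintro e ⟨C, rfl⟩
    exact ⟨ZofC C, isNSCa_ZofC C, etaNS_ZofC (NCSIR NZ) PZ C⟩
  refine ⟨?_, ?_, ?_⟩
  · exact csSup_le_csSup hbdd ⟨etaC (NCSIR NZ) PZ 2 2 C0, C0, rfl⟩ hsub
  · have h78 : etaC (NCSIR NZ) PZ 2 2 C0 = 7/8 := etaC_C0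
    calc (7:ℝ)/8 = etaC (NCSIR NZ) PZ 2 2 C0 := h78.symm
      _ ≤ etaCOpt (NCSIR NZ) PZ 2 2 := le_csSup (hbdd.mono hsub) ⟨C0, rfl⟩
  · refine Real.sSup_le ?_ (by norm_num)
    rintro e ⟨Z, hZ, rfl⟩
    exact etaNS_NZ_le Z hZ


end
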